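/- arXiv:0803.1133 — 2 statements merged into one kernel-verified Lean document; each statement's English description precedes it below -/
import Mathlib

section
/- Let V be an n-dimensional vector space over a division ring and 1 ≤ k ≤ n-1. In the Grassmann graph on G_k(V) (vertices: k-dimensional subspaces; edges: adjacent pairs), the graph is connected and the distance between S, U ∈ G_k(V) equals k - dim(S ∩ U). -/
/-- The Grassmann graph: vertices are the k-dimensional subspaces of V,
with S and U adjacent iff they are distinct and dim(S ∩ U) = k - 1. -/
def grassmannGraph (K V : Type*) [DivisionRing K] [AddCommGroup V] [Module K V]
    (k : ℕ) : SimpleGraph {S : Submodule K V // Module.finrank K S = k} where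
  Adj S U := S ≠ U ∧ Module.finrank K ↥(S.1 ⊓ U.1) = k - 1
  symm := by
    constructor
    rintro S U ⟨h1, h2⟩
    exact ⟨h1.symm, by rwa [inf_comm]⟩
  loopless := by
    constructor
    rintro S ⟨h, -⟩
    exact h rfl

open Module Submodule

section Aux

variable {K V : Type*} [DivisionRing K] [AddCommGroup V] [Module K V] [FiniteDimensional K V]

lemma aux_extend_one {N U : Submodule K V} (hNU : N ≤ U)
    (h : finrank K N < finrank K U) :
    ∃ X : Submodule K V, N ≤ X ∧ X ≤ U ∧ finrank K X = finrank K N + 1 := by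
  have hne : ¬ U ≤ N := fun hle => absurd (Submodule.finrank_mono hle) (by omega)
  obtain ⟨x, hxU, hxN⟩ := SetLike.not_le_iff_exists.mp hne
  have hx0 : x ≠ 0 := fun h0 => hxN (h0 ▸ N.zero_mem)
  have hdisj : Disjoint N (K ∙ x) := (Submodule.disjoint_span_singleton).mpr
    (fun hx => absurd hx hxN)
  refine ⟨N ⊔ (K ∙ x), le_sup_left, sup_le hNU ((span_singleton_le_iff_mem _ _).mpr hxU), ?_⟩
  have := Submodule.finrank_sup_add_finrank_inf_eq N (K ∙ x)
  rw [hdisj.eq_bot] at this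
  simp [finrank_span_singleton hx0, finrank_bot] at this
  omega

lemma aux_intermediate {N U : Submodule K V} (hNU : N ≤ U) (m : ℕ)
    (h1 : finrank K N ≤ m) (h2 : m ≤ finrank K U) :
    ∃ X : Submodule K V, N ≤ X ∧ X ≤ U ∧ finrank K X = m := by
  induction m, h1 using Nat.le_induction with
  | base => exact ⟨N, le_rfl, hNU, rfl⟩
  | succ m hm ih =>
    obtain ⟨X, hNX, hXU, hX⟩ := ih (by omega)
    obtain ⟨Y, hXY, hYU, hY⟩ := aux_extend_one hXU (by omega)
    exact ⟨Y, hNX.trans hXY, hYU, by omega⟩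

variable {k : ℕ}

lemma aux_step_le {S W U : Submodule K V}
    (hW : finrank K W = k) (hSW : finrank K ↥(S ⊓ W) = k - 1) :
    finrank K ↥(W ⊓ U) ≤ finrank K ↥(S ⊓ U) + 1 := by
  have h1 := Submodule.finrank_sup_add_finrank_inf_eq (W ⊓ U) (S ⊓ W)
  have h2 : (W ⊓ U) ⊔ (S ⊓ W) ≤ W := sup_le inf_le_left inf_le_right
  have h3 : finrank K ↥((W ⊓ U) ⊔ (S ⊓ W)) ≤ k := hW ▸ Submodule.finrank_mono h2
  have h4 : (W ⊓ U) ⊓ (S ⊓ W) ≤ S ⊓ U :=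
    le_inf (le_trans inf_le_right inf_le_left) (le_trans inf_le_left inf_le_right)
  have h5 := Submodule.finrank_mono h4
  have h6 : k - 1 ≤ finrank K ↥((W ⊓ U) ⊔ (S ⊓ W)) := by
    calc k - 1 = finrank K ↥(S ⊓ W) := hSW.symm
    _ ≤ _ := Submodule.finrank_mono le_sup_right
  omega

lemma aux_walk_lower
    {S U : {S : Submodule K V // Module.finrank K S = k}}
    (p : (grassmannGraph K V k).Walk S U) :
    k ≤ finrank K ↥(S.1 ⊓ U.1) + p.length := by
  induction p with
  | nil =>
    rename_i A
    simp only [SimpleGraph.Walk.length_nil, Nat.add_zero]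
    rw [show A.1 ⊓ A.1 = A.1 from inf_idem _, A.2]
  | @cons A B C h q ih =>
    obtain ⟨hne, hdim⟩ := id h
    have hstep : finrank K ↥(B.1 ⊓ C.1) ≤ finrank K ↥(A.1 ⊓ C.1) + 1 :=
      aux_step_le B.2 hdim
    simp only [SimpleGraph.Walk.length_cons]
    omega

lemma aux_walk_upper (hk1 : 1 ≤ k) (m : ℕ) :
    ∀ S U : {S : Submodule K V // Module.finrank K S = k},
      k ≤ finrank K ↥(S.1 ⊓ U.1) + m →
      ∃ p : (grassmannGraph K V k).Walk S U, p.length ≤ m := by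
  induction m with
  | zero =>
    intro S U h
    have hle : finrank K ↥(S.1 ⊓ U.1) ≤ k := by
      have := Submodule.finrank_mono (inf_le_left : S.1 ⊓ U.1 ≤ S.1); rw [S.2] at this; exact this
    have heq : S.1 ⊓ U.1 = S.1 := eq_of_le_of_finrank_eq inf_le_left (by omega)
    have hSU : S = U := Subtype.ext
      (eq_of_le_of_finrank_eq (le_of_inf_eq heq) (S.2.trans U.2.symm))
    subst hSU
    exact ⟨SimpleGraph.Walk.nil, by simp⟩
  | succ m ih =>
    intro S U h
    by_cases hSU : S = U
    · subst hSU; exact ⟨SimpleGraph.Walk.nil, by simp⟩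
    have hneS : ¬ U.1 ≤ S.1 := fun hle =>
      hSU (Subtype.ext (eq_of_le_of_finrank_eq hle (U.2.trans S.2.symm))).symm
    obtain ⟨v, hvU, hvS⟩ := SetLike.not_le_iff_exists.mp hneS
    have hv0 : v ≠ 0 := fun h0 => hvS (h0 ▸ S.1.zero_mem)
    have hSUn : S.1 ⊓ U.1 ≠ S.1 := fun he =>
      hSU (Subtype.ext (eq_of_le_of_finrank_eq (le_of_inf_eq he) (S.2.trans U.2.symm)))
    have hltk : finrank K ↥(S.1 ⊓ U.1) < k := by
      have hle : finrank K ↥(S.1 ⊓ U.1) ≤ k := by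
        have := Submodule.finrank_mono (inf_le_left : S.1 ⊓ U.1 ≤ S.1); rw [S.2] at this
        exact this
      rcases lt_or_eq_of_le hle with h' | h'
      · exact h'
      · exact absurd (eq_of_le_of_finrank_eq inf_le_left (by omega)) hSUn
    have hinfle : S.1 ⊓ U.1 ≤ S.1 := inf_le_left
    obtain ⟨H, hH1, hH2, hH3⟩ := aux_intermediate hinfle (k - 1) (by omega) (by rw [S.2]; omega)
    have hvH : v ∉ H := fun hv => hvS (hH2 hv)
    have hdisj : Disjoint H (K ∙ v) := (Submodule.disjoint_span_singleton).mpr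
      (fun hv => absurd hv hvH)
    have hWrank : finrank K ↥(H ⊔ (K ∙ v)) = k := by
      have := Submodule.finrank_sup_add_finrank_inf_eq H (K ∙ v)
      rw [hdisj.eq_bot] at this
      simp [finrank_span_singleton hv0, finrank_bot] at this
      omega
    set W : {S : Submodule K V // Module.finrank K S = k} := ⟨H ⊔ (K ∙ v), hWrank⟩ with hW
    have hvW : v ∈ W.1 := Submodule.mem_sup_right (Submodule.mem_span_singleton_self v)
    have hSneW : S ≠ W := fun he => hvS (by rw [he]; exact hvW)
    have hSWn : S.1 ⊓ W.1 ≠ S.1 := fun he => hSneW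
      (Subtype.ext (eq_of_le_of_finrank_eq (le_of_inf_eq he) (S.2.trans hWrank.symm)))
    have hHle : H ≤ S.1 ⊓ W.1 := le_inf hH2 le_sup_left
    have hSWrank : finrank K ↥(S.1 ⊓ W.1) = k - 1 := by
      have hub : finrank K ↥(S.1 ⊓ W.1) ≤ k := by
        have := Submodule.finrank_mono (inf_le_left : S.1 ⊓ W.1 ≤ S.1); rw [S.2] at this
        exact this
      have hlb : k - 1 ≤ finrank K ↥(S.1 ⊓ W.1) := by
        rw [← hH3]; exact Submodule.finrank_mono hHle
      rcases lt_or_eq_of_le hub with h' | h'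
      · omega
      · exact absurd (eq_of_le_of_finrank_eq inf_le_left (by omega)) hSWn
    have hadj : (grassmannGraph K V k).Adj S W := ⟨hSneW, hSWrank⟩
    have hMle : (S.1 ⊓ U.1) ⊔ (K ∙ v) ≤ W.1 ⊓ U.1 :=
      sup_le (le_inf (hH1.trans le_sup_left) inf_le_right)
        (le_inf le_sup_right ((span_singleton_le_iff_mem _ _).mpr hvU))
    have hdisj2 : Disjoint (S.1 ⊓ U.1) (K ∙ v) := (Submodule.disjoint_span_singleton).mpr
      (fun hv => absurd (Submodule.mem_inf.mp hv).1 hvS)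
    have hMrank : finrank K ↥((S.1 ⊓ U.1) ⊔ (K ∙ v)) = finrank K ↥(S.1 ⊓ U.1) + 1 := by
      have := Submodule.finrank_sup_add_finrank_inf_eq (S.1 ⊓ U.1) (K ∙ v)
      rw [hdisj2.eq_bot] at this
      simp [finrank_span_singleton hv0, finrank_bot] at this
      omega
    have hWU : finrank K ↥(S.1 ⊓ U.1) + 1 ≤ finrank K ↥(W.1 ⊓ U.1) := by
      rw [← hMrank]; exact Submodule.finrank_mono hMle
    obtain ⟨q, hq⟩ := ih W U (by omega)
    exact ⟨SimpleGraph.Walk.cons hadj q, by simpa using Nat.succ_le_succ hq⟩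

end Aux

/-- For 1 ≤ k ≤ n-1, the Grassmann graph on G_k(V) is connected
and the distance between S and U equals k - dim(S ∩ U). -/
theorem grassmannGraph_connected_and_dist {K V : Type*} [DivisionRing K]
    [AddCommGroup V] [Module K V] [FiniteDimensional K V] (n k : ℕ)
    (hn : Module.finrank K V = n) (hk1 : 1 ≤ k) (hk2 : k ≤ n - 1) :
    (grassmannGraph K V k).Connected ∧
      ∀ S U : {S : Submodule K V // Module.finrank K S = k},
        (grassmannGraph K V k).dist S U = k - Module.finrank K ↥(S.1 ⊓ U.1) := by
  have hkn : k ≤ n := by omega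
  -- nonempty
  have hne : Nonempty {S : Submodule K V // Module.finrank K S = k} := by
    obtain ⟨X, -, -, hX⟩ := aux_intermediate (bot_le : (⊥ : Submodule K V) ≤ ⊤) k
      (by simp) (by rw [finrank_top, hn]; exact hkn)
    exact ⟨⟨X, hX⟩⟩
  have key : ∀ S U : {S : Submodule K V // Module.finrank K S = k},
      (grassmannGraph K V k).Reachable S U ∧
      (grassmannGraph K V k).dist S U = k - Module.finrank K ↥(S.1 ⊓ U.1) := by
    intro S U
    have hle : finrank K ↥(S.1 ⊓ U.1) ≤ k := by
      have := Submodule.finrank_mono (inf_le_left : S.1 ⊓ U.1 ≤ S.1); rw [S.2] at this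
      exact this
    obtain ⟨p, hp⟩ := aux_walk_upper hk1 (k - finrank K ↥(S.1 ⊓ U.1)) S U (by omega)
    have hreach : (grassmannGraph K V k).Reachable S U := ⟨p⟩
    refine ⟨hreach, le_antisymm (le_trans (SimpleGraph.dist_le p) hp) ?_⟩
    obtain ⟨q, hq⟩ := hreach.exists_walk_length_eq_dist
    have := aux_walk_lower q
    omega
  exact ⟨{ preconnected := fun S U => (key S U).1, nonempty := hne }, fun S U => (key S U).2⟩
end

section
/- Let V be an n-dimensional vector space over a division ring with 1 < k < n-1, and suppose S₁, S₂ ∈ G_k(V) are adjacent (dim(S₁ ∩ S₂) = k-1). Then for every S ∈ G_k(V) \ {S₁, S₂} containing S₁ ∩ S₂ and contained in S₁ + S₂, every U ∈ G_k(V) opposite to S (i.e., at distance equal to the diameter min(k, n-k) from S) is opposite to S₁ or to S₂. -/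
section Aux

variable {K V : Type*} [DivisionRing K] [AddCommGroup V] [Module K V] [FiniteDimensional K V]

lemma GrassmannAux.finrank_sup_span {W : Submodule K V} {v : V} (hv : v ∉ W) :
    Module.finrank K ↥(W ⊔ (K ∙ v)) = Module.finrank K W + 1 := by
  have hv0 : v ≠ 0 := fun h => hv (h ▸ W.zero_mem)
  have hd : W ⊓ (K ∙ v) = ⊥ :=
    ((Submodule.disjoint_span_singleton' hv0).mpr hv).eq_bot
  have := Submodule.finrank_sup_add_finrank_inf_eq W (K ∙ v)
  rw [hd, finrank_bot, finrank_span_singleton hv0] at this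
  omega

lemma GrassmannAux.exists_intermediate {W A : Submodule K V} (hWA : W ≤ A) (m : ℕ)
    (h1 : Module.finrank K W ≤ m) (h2 : m ≤ Module.finrank K A) :
    ∃ H : Submodule K V, W ≤ H ∧ H ≤ A ∧ Module.finrank K H = m := by
  induction m with
  | zero => exact ⟨W, le_rfl, hWA, by omega⟩
  | succ m ih =>
    rcases Nat.lt_or_ge (Module.finrank K W) (m+1) with h | h
    · obtain ⟨H, hWH, hHA, hH⟩ := ih (by omega) (by omega)
      have hlt : H < A := lt_of_le_of_ne hHA (by rintro rfl; omega)
      obtain ⟨x, hxA, hxH⟩ := SetLike.exists_of_lt hlt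
      refine ⟨H ⊔ (K ∙ x), hWH.trans le_sup_left, sup_le hHA ?_, ?_⟩
      · exact (Submodule.span_singleton_le_iff_mem x A).mpr hxA
      · rw [GrassmannAux.finrank_sup_span hxH, hH]
    · exact ⟨W, le_rfl, hWA, by omega⟩

variable {k : ℕ}

lemma GrassmannAux.step {A B : Submodule K V} (hA : Module.finrank K A = k)
    (hB : Module.finrank K B = k) (hne : Module.finrank K ↥(A ⊓ B) < k) :
    ∃ A' : Submodule K V, Module.finrank K A' = k ∧ A' ≠ A ∧
      Module.finrank K ↥(A' ⊓ A) = k - 1 ∧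
      Module.finrank K ↥(A ⊓ B) + 1 ≤ Module.finrank K ↥(A' ⊓ B) := by
  have hBA : ¬ B ≤ A := by
    intro h
    rw [inf_eq_right.mpr h, hB] at hne; omega
  obtain ⟨v, hvB, hvA⟩ := SetLike.not_le_iff_exists.mp hBA
  obtain ⟨H, hWH, hHA, hH⟩ := GrassmannAux.exists_intermediate (W := A ⊓ B) (A := A)
    inf_le_left (k - 1) (by omega) (by omega)
  have hvH : v ∉ H := fun h => hvA (hHA h)
  have hvmem : v ∈ H ⊔ (K ∙ v) :=
    Submodule.mem_sup_right (Submodule.mem_span_singleton_self v)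
  refine ⟨H ⊔ (K ∙ v), ?_, ?_, ?_, ?_⟩
  · rw [GrassmannAux.finrank_sup_span hvH, hH]; omega
  · intro h
    exact hvA (h ▸ hvmem)
  · have hle : H ≤ (H ⊔ (K ∙ v)) ⊓ A := le_inf le_sup_left hHA
    have h1 : Module.finrank K H ≤ Module.finrank K ↥((H ⊔ (K ∙ v)) ⊓ A) :=
      Submodule.finrank_mono hle
    have hlt : (H ⊔ (K ∙ v)) ⊓ A < H ⊔ (K ∙ v) := lt_of_le_of_ne inf_le_left (by
      intro h
      have hsub : (H ⊔ (K ∙ v) : Submodule K V) ≤ A := h ▸ inf_le_right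
      exact hvA (hsub hvmem))
    have h2 := Submodule.finrank_lt_finrank_of_lt hlt
    rw [GrassmannAux.finrank_sup_span hvH, hH] at h2
    omega
  · have hle : (A ⊓ B) ⊔ (K ∙ v) ≤ (H ⊔ (K ∙ v)) ⊓ B :=
      le_inf (sup_le (hWH.trans le_sup_left) le_sup_right)
        (sup_le inf_le_right ((Submodule.span_singleton_le_iff_mem v B).mpr hvB))
    have hvAB : v ∉ A ⊓ B := fun h => hvA h.1
    have := Submodule.finrank_mono hle
    rwa [GrassmannAux.finrank_sup_span hvAB] at this

lemma GrassmannAux.exists_walk (d : ℕ) :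
    ∀ A B : {S : Submodule K V // Module.finrank K S = k},
      k ≤ Module.finrank K ↥(A.1 ⊓ B.1) + d →
      ∃ p : (grassmannGraph K V k).Walk A B, p.length ≤ d := by
  induction d with
  | zero =>
    intro A B h
    have hA := A.2; have hB := B.2
    have h1 : A.1 ⊓ B.1 = A.1 :=
      Submodule.eq_of_le_of_finrank_le inf_le_left (by omega)
    have h2 : A.1 = B.1 :=
      Submodule.eq_of_le_of_finrank_le (by rw [← h1]; exact inf_le_right) (by omega)
    cases Subtype.ext h2
    exact ⟨SimpleGraph.Walk.nil, le_rfl⟩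
  | succ d ih =>
    intro A B h
    by_cases hAB : A = B
    · cases hAB; exact ⟨SimpleGraph.Walk.nil, by simp⟩
    · have hA := A.2; have hB := B.2
      have hlt : Module.finrank K ↥(A.1 ⊓ B.1) < k := by
        rcases Nat.lt_or_ge (Module.finrank K ↥(A.1 ⊓ B.1)) k with h' | h'
        · exact h'
        · exfalso
          have h1 : A.1 ⊓ B.1 = A.1 :=
            Submodule.eq_of_le_of_finrank_le inf_le_left (by omega)
          have h2 : A.1 = B.1 :=
            Submodule.eq_of_le_of_finrank_le (by rw [← h1]; exact inf_le_right) (by omega)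
          exact hAB (Subtype.ext h2)
      obtain ⟨A', hA', hne, hinf, hstep⟩ := GrassmannAux.step A.2 B.2 hlt
      have hadj : (grassmannGraph K V k).Adj A ⟨A', hA'⟩ :=
        ⟨fun hh => hne (congrArg Subtype.val hh).symm, by rwa [inf_comm] at hinf⟩
      obtain ⟨q, hq⟩ := ih ⟨A', hA'⟩ B
        (by show k ≤ Module.finrank K ↥(A' ⊓ B.1) + d; omega)
      refine ⟨SimpleGraph.Walk.cons hadj q, ?_⟩
      simpa using Nat.add_le_add_right hq 1

lemma GrassmannAux.adj_inf_le {A B C : Submodule K V} (hB : Module.finrank K B = k)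
    (h : Module.finrank K ↥(A ⊓ B) = k - 1) :
    Module.finrank K ↥(B ⊓ C) ≤ Module.finrank K ↥(A ⊓ C) + 1 := by
  have e1 := Submodule.finrank_sup_add_finrank_inf_eq (B ⊓ C) (A ⊓ B)
  have h2 : Module.finrank K ↥((B ⊓ C) ⊔ (A ⊓ B)) ≤ k :=
    le_of_le_of_eq (Submodule.finrank_mono (sup_le inf_le_left inf_le_right)) hB
  have h3 : (B ⊓ C) ⊓ (A ⊓ B) ≤ A ⊓ C :=
    le_inf (le_trans inf_le_right inf_le_left) (le_trans inf_le_left inf_le_right)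
  have h4 := Submodule.finrank_mono h3
  have h5 : Module.finrank K ↥(B ⊓ C) ≤ k :=
    le_of_le_of_eq (Submodule.finrank_mono inf_le_left) hB
  omega

lemma GrassmannAux.walk_lower :
    ∀ {A B : {S : Submodule K V // Module.finrank K S = k}}
      (p : (grassmannGraph K V k).Walk A B),
      k ≤ Module.finrank K ↥(A.1 ⊓ B.1) + p.length
  | A, _, .nil => by
    simp only [SimpleGraph.Walk.length_nil, add_zero]
    exact (le_of_eq A.2.symm).trans (Submodule.finrank_mono (le_inf le_rfl le_rfl))
  | A, B, @SimpleGraph.Walk.cons _ _ _ Cv _ h q => by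
    have h1 := GrassmannAux.adj_inf_le (C := B.1) Cv.2 h.2
    have h2 := GrassmannAux.walk_lower q
    simp only [SimpleGraph.Walk.length_cons]
    omega

lemma GrassmannAux.grassmann_dist (A B : {S : Submodule K V // Module.finrank K S = k}) :
    (grassmannGraph K V k).dist A B = k - Module.finrank K ↥(A.1 ⊓ B.1) := by
  have hle : Module.finrank K ↥(A.1 ⊓ B.1) ≤ k :=
    le_of_le_of_eq (Submodule.finrank_mono inf_le_left) A.2
  obtain ⟨p, hp⟩ := GrassmannAux.exists_walk (k - Module.finrank K ↥(A.1 ⊓ B.1)) A B (by omega)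
  have hub := (grassmannGraph K V k).dist_le p
  have hreach : (grassmannGraph K V k).Reachable A B := ⟨p⟩
  obtain ⟨q, hq⟩ := hreach.exists_walk_length_eq_dist
  have hlb := GrassmannAux.walk_lower q
  omega

end Aux

/-- If S₁, S₂ ∈ G_k(V) are adjacent, then for every S ∈ G_k(V),
distinct from S₁ and S₂, with S₁ ∩ S₂ ⊆ S ⊆ S₁ + S₂, every U ∈ G_k(V) opposite
to S (at distance min(k, n-k), the diameter) is opposite to S₁ or to S₂. -/
theorem grassmann_line_opposite {K V : Type*} [DivisionRing K]
    [AddCommGroup V] [Module K V] [FiniteDimensional K V] (n k : ℕ)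
    (hn : Module.finrank K V = n) (hk1 : 1 < k) (hk2 : k < n - 1)
    (S₁ S₂ S : {S : Submodule K V // Module.finrank K S = k})
    (hadj : (grassmannGraph K V k).Adj S₁ S₂)
    (hS1 : S ≠ S₁) (hS2 : S ≠ S₂)
    (hinf : S₁.1 ⊓ S₂.1 ≤ S.1) (hsup : S.1 ≤ S₁.1 ⊔ S₂.1) :
    ∀ U : {S : Submodule K V // Module.finrank K S = k},
      (grassmannGraph K V k).dist U S = min k (n - k) →
      (grassmannGraph K V k).dist U S₁ = min k (n - k) ∨
      (grassmannGraph K V k).dist U S₂ = min k (n - k) := by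
  intro U hU
  have hdistS := GrassmannAux.grassmann_dist U S
  have hdist1 := GrassmannAux.grassmann_dist U S₁
  have hdist2 := GrassmannAux.grassmann_dist U S₂
  have hSk := S.2
  have hW : Module.finrank K ↥(S₁.1 ⊓ S₂.1) = k - 1 := hadj.2
  have hT : Module.finrank K ↥(S₁.1 ⊔ S₂.1) = k + 1 := by
    have h := Submodule.finrank_sup_add_finrank_inf_eq S₁.1 S₂.1
    have := S₁.2; have := S₂.2
    omega
  have amb : ∀ A B : {S : Submodule K V // Module.finrank K S = k},
      k + k ≤ n + Module.finrank K ↥(A.1 ⊓ B.1) := by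
    intro A B
    have h1 := Submodule.finrank_sup_add_finrank_inf_eq A.1 B.1
    have h2 : Module.finrank K ↥(A.1 ⊔ B.1) ≤ n := hn ▸ Submodule.finrank_le _
    have := A.2; have := B.2; omega
  have hUS := amb U S; have hUS1 := amb U S₁; have hUS2 := amb U S₂
  have hleUS : Module.finrank K ↥(U.1 ⊓ S.1) ≤ k :=
    le_of_le_of_eq (Submodule.finrank_mono inf_le_left) U.2
  have hUSd : Module.finrank K ↥(U.1 ⊓ S.1) = k - min k (n - k) := by omega
  by_cases h1 : Module.finrank K ↥(U.1 ⊓ S₁.1) ≤ k - min k (n - k)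
  · left; omega
  · by_cases h2 : Module.finrank K ↥(U.1 ⊓ S₂.1) ≤ k - min k (n - k)
    · right; omega
    · exfalso
      by_cases hc : U.1 ⊓ S₂.1 ≤ S₁.1 ⊓ S₂.1
      · have hle : U.1 ⊓ S₂.1 ≤ U.1 ⊓ S.1 := le_inf inf_le_left (hc.trans hinf)
        have := Submodule.finrank_mono hle
        omega
      · obtain ⟨v, hvUS2, hvW⟩ := SetLike.not_le_iff_exists.mp hc
        have hvU : v ∈ U.1 := hvUS2.1
        have hvS2 : v ∈ S₂.1 := hvUS2.2
        have hvS1 : v ∉ S₁.1 := fun h => hvW ⟨h, hvS2⟩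
        have hvUS1 : v ∉ U.1 ⊓ S₁.1 := fun h => hvS1 h.2
        have hXle : (U.1 ⊓ S₁.1) ⊔ (K ∙ v) ≤ U.1 ⊓ (S₁.1 ⊔ S₂.1) :=
          le_inf
            (sup_le inf_le_left ((Submodule.span_singleton_le_iff_mem v _).mpr hvU))
            (sup_le (inf_le_right.trans le_sup_left)
              ((Submodule.span_singleton_le_iff_mem v _).mpr (Submodule.mem_sup_right hvS2)))
        have hX : Module.finrank K ↥((U.1 ⊓ S₁.1) ⊔ (K ∙ v)) =
            Module.finrank K ↥(U.1 ⊓ S₁.1) + 1 := GrassmannAux.finrank_sup_span hvUS1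
        have hY := Submodule.finrank_mono hXle
        have e1 := Submodule.finrank_sup_add_finrank_inf_eq (U.1 ⊓ (S₁.1 ⊔ S₂.1)) S.1
        have e2 : Module.finrank K ↥((U.1 ⊓ (S₁.1 ⊔ S₂.1)) ⊔ S.1) ≤ k + 1 :=
          (Submodule.finrank_mono (sup_le inf_le_right hsup)).trans (le_of_eq hT)
        have e3 : (U.1 ⊓ (S₁.1 ⊔ S₂.1)) ⊓ S.1 = U.1 ⊓ S.1 := by
          apply le_antisymm
          · exact le_inf (inf_le_left.trans inf_le_left) inf_le_right
          · exact le_inf (le_inf inf_le_left (inf_le_right.trans hsup)) inf_le_right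
        rw [e3] at e1
        omega
end
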